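/- Let γ⁺, γ⁻ > 0, let n > 0, and let 0 ≤ ρ₁ ≤ ρ₂. Suppose x₁ > 0 satisfies x₁^(γ⁺/γ⁻)·(x₁ − ρ₁) = n·x₁ and x₂ > 0 satisfies x₂^(γ⁺/γ⁻)·(x₂ − ρ₂) = n·x₂. Then min{1, γ⁻/γ⁺}·(ρ₂ − ρ₁) ≤ x₂ − x₁ ≤ max{1, γ⁻/γ⁺}·(ρ₂ − ρ₁). In particular the dominant density is nondecreasing and Lipschitz in ρ for fixed n. -/

import Mathlib

/-- MVT step: for the function `x ↦ x - n * x^(1-α)` on `[a,b] ⊂ (0,∞)` with `n ≤ a^α`,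
the slope lies in `[min 1 α, max 1 α]`. -/
lemma biFluid_mvt_key (α n a b : ℝ) (hα : 0 < α) (hn : 0 < n) (ha : 0 < a) (hab : a < b)
    (hna : n ≤ a ^ α) :
    ∃ c, min 1 α ≤ c ∧ c ≤ max 1 α ∧
      (b - n * b ^ (1 - α)) - (a - n * a ^ (1 - α)) = c * (b - a) := by
  set f : ℝ → ℝ := fun x => x - n * x ^ (1 - α) with hf
  set f' : ℝ → ℝ := fun x => 1 - n * ((1 - α) * x ^ (1 - α - 1)) with hf'
  have hderiv : ∀ x, 0 < x → HasDerivAt f (f' x) x := by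
    intro x hx
    exact (hasDerivAt_id x).sub
      ((Real.hasDerivAt_rpow_const (Or.inl hx.ne')).const_mul n)
  have hcont : ContinuousOn f (Set.Icc a b) := by
    intro x hx
    exact (hderiv x (lt_of_lt_of_le ha hx.1)).continuousAt.continuousWithinAt
  obtain ⟨ξ, hξ, hslope⟩ := exists_hasDerivAt_eq_slope f f' hab hcont
    (fun x hx => hderiv x (lt_trans ha hx.1))
  have hξ0 : 0 < ξ := lt_trans ha hξ.1
  have hξα : 0 < ξ ^ α := Real.rpow_pos_of_pos hξ0 α
  have haα : 0 < a ^ α := Real.rpow_pos_of_pos ha α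
  have hle : a ^ α ≤ ξ ^ α := Real.rpow_le_rpow ha.le hξ.1.le hα.le
  -- the slope value
  have hrw : f' ξ = 1 - (1 - α) * (n / ξ ^ α) := by
    simp only [hf']
    rw [show (1 - α - 1 : ℝ) = -α by ring, Real.rpow_neg hξ0.le]
    ring
  have ht0 : 0 < n / ξ ^ α := div_pos hn hξα
  have ht1 : n / ξ ^ α ≤ 1 := (div_le_one hξα).mpr (le_trans hna hle)
  refine ⟨f' ξ, ?_, ?_, ?_⟩
  · rcases le_total 1 α with h | h
    · rw [min_eq_left h, hrw]; nlinarith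
    · rw [min_eq_right h, hrw]; nlinarith
  · rcases le_total 1 α with h | h
    · rw [max_eq_right h, hrw]; nlinarith
    · rw [max_eq_left h, hrw]; nlinarith
  · have hb : b - a ≠ 0 := sub_ne_zero.mpr hab.ne'
    have := (eq_div_iff hb).mp hslope
    simpa [hf] using this.symm

/-- From the defining equation with `ρ ≥ 0`, express `ρ` via `x` and bound `n ≤ x^α`. -/
lemma biFluid_rho_eq (α n ρ x : ℝ) (hα : 0 < α) (hn : 0 < n) (hρ : 0 ≤ ρ)
    (hx : 0 < x) (heq : x ^ α * (x - ρ) = n * x) :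
    ρ = x - n * x ^ (1 - α) ∧ n ≤ x ^ α := by
  have hxα : 0 < x ^ α := Real.rpow_pos_of_pos hx α
  have h1 : x ^ (1 - α) = x / x ^ α := by
    rw [Real.rpow_sub hx, Real.rpow_one]
  have hr : ρ = x - n * x ^ (1 - α) := by
    rw [h1]; field_simp; linear_combination -heq
  refine ⟨hr, ?_⟩
  have hp : 0 < x ^ (1 - α) := Real.rpow_pos_of_pos hx _
  have h2 : x ^ (1 - α) * x ^ α = x := by
    rw [← Real.rpow_add hx]; norm_num
  nlinarith [hr, hρ, hp]

/-- Integrated form of `min{1,γ⁻/γ⁺} ≤ ∂ρ ρ₊ ≤ max{1,γ⁻/γ⁺}`: the dominant density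
is nondecreasing and Lipschitz in ρ for fixed n. -/
theorem biFluid_dominant_density_lipschitz_in_rho
    (gp gm n ρ₁ ρ₂ x₁ x₂ : ℝ) (hgp : 0 < gp) (hgm : 0 < gm)
    (hn : 0 < n) (hρ₁ : 0 ≤ ρ₁) (hρ : ρ₁ ≤ ρ₂)
    (hx₁ : 0 < x₁) (heq₁ : x₁ ^ (gp / gm) * (x₁ - ρ₁) = n * x₁)
    (hx₂ : 0 < x₂) (heq₂ : x₂ ^ (gp / gm) * (x₂ - ρ₂) = n * x₂) :
    min 1 (gm / gp) * (ρ₂ - ρ₁) ≤ x₂ - x₁ ∧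
      x₂ - x₁ ≤ max 1 (gm / gp) * (ρ₂ - ρ₁) := by
  set α : ℝ := gp / gm with hαdef
  have hα : 0 < α := div_pos hgp hgm
  have hinv : gm / gp = α⁻¹ := by rw [hαdef, inv_div]
  obtain ⟨hr₁, hn₁⟩ := biFluid_rho_eq α n ρ₁ x₁ hα hn hρ₁ hx₁ heq₁
  obtain ⟨hr₂, hn₂⟩ := biFluid_rho_eq α n ρ₂ x₂ hα hn (le_trans hρ₁ hρ) hx₂ heq₂
  -- get the slope c
  obtain ⟨c, hc1, hc2, hc⟩ :
      ∃ c, min 1 α ≤ c ∧ c ≤ max 1 α ∧ ρ₂ - ρ₁ = c * (x₂ - x₁) := by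
    rcases lt_trichotomy x₁ x₂ with h | h | h
    · obtain ⟨c, hc1, hc2, hc⟩ := biFluid_mvt_key α n x₁ x₂ hα hn hx₁ h hn₁
      exact ⟨c, hc1, hc2, by rw [hr₁, hr₂]; linarith⟩
    · exact ⟨1, min_le_left _ _, le_max_left _ _, by rw [hr₁, hr₂, h]; ring⟩
    · obtain ⟨c, hc1, hc2, hc⟩ := biFluid_mvt_key α n x₂ x₁ hα hn hx₂ h hn₂
      exact ⟨c, hc1, hc2, by rw [hr₁, hr₂]; linarith⟩
  have hcpos : 0 < c := lt_of_lt_of_le (lt_min one_pos hα) hc1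
  have hd : 0 ≤ x₂ - x₁ := by nlinarith
  have hαinv : 0 < α⁻¹ := inv_pos.mpr hα
  have h1 : min 1 α⁻¹ * c ≤ 1 := by
    rcases le_total 1 α with h | h
    · rw [min_eq_right (inv_le_one_of_one_le₀ h)]
      calc α⁻¹ * c ≤ α⁻¹ * α := by
            apply mul_le_mul_of_nonneg_left _ hαinv.le
            rw [max_eq_right h] at hc2; exact hc2
        _ = 1 := inv_mul_cancel₀ hα.ne'
    · rw [min_eq_left ((one_le_inv₀ hα).mpr h)]
      rw [max_eq_left h] at hc2; linarith
  have h2 : 1 ≤ max 1 α⁻¹ * c := by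
    rcases le_total 1 α with h | h
    · rw [max_eq_left (inv_le_one_of_one_le₀ h)]
      rw [min_eq_left h] at hc1; linarith
    · rw [max_eq_right ((one_le_inv₀ hα).mpr h)]
      rw [min_eq_right h] at hc1
      calc (1:ℝ) = α⁻¹ * α := (inv_mul_cancel₀ hα.ne').symm
        _ ≤ α⁻¹ * c := mul_le_mul_of_nonneg_left hc1 hαinv.le
  rw [hinv]
  constructor
  · have := mul_le_mul_of_nonneg_right h1 hd
    nlinarith
  · have := mul_le_mul_of_nonneg_right h2 hd
    nlinarith
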